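/- arXiv:2307.04543 — 4 statements merged into one kernel-verified Lean document; each statement's English description precedes it below -/
import Mathlib

section
/- The Lobachevsky function Λ(θ) = −∫₀^θ log|2 sin t| dt is continuous on the real line. -/
open Real MeasureTheory

/-- The Lobachevsky function `Λ(θ) = −∫₀^θ log |2 sin t| dt`. -/
noncomputable def lob (θ : ℝ) : ℝ := - ∫ t in (0:ℝ)..θ, Real.log |2 * Real.sin t|

/-- `-log` is interval integrable on `[0,1]`. -/
lemma negLog_intervalIntegrable :
    IntervalIntegrable (fun x => -Real.log x) MeasureTheory.volume 0 1 := by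
  apply intervalIntegral.intervalIntegrable_deriv_of_nonneg
    (g := fun x => x - x * Real.log x)
  · exact (continuous_id.sub Real.continuous_mul_log).continuousOn
  · intro x hx
    simp only [min_eq_left, max_eq_right, zero_le_one, Set.mem_Ioo] at hx
    have h1 : HasDerivAt (fun x : ℝ => x * Real.log x) (Real.log x + 1) x :=
      Real.hasDerivAt_mul_log (ne_of_gt hx.1)
    have := (hasDerivAt_id x).sub h1
    refine this.congr_deriv ?_
    ring
  · intro x hx
    simp only [min_eq_left, max_eq_right, zero_le_one, Set.mem_Ioo] at hx
    simp only [neg_nonneg]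
    exact Real.log_nonpos hx.1.le hx.2.le

lemma log_intervalIntegrable_pi_div_two :
    IntervalIntegrable Real.log MeasureTheory.volume 0 (Real.pi / 2) := by
  have h1 : IntervalIntegrable Real.log MeasureTheory.volume 0 1 := by
    have h := negLog_intervalIntegrable.neg
    have e : (-fun x => -Real.log x) = Real.log := by funext x; simp
    rwa [e] at h
  have h2 : IntervalIntegrable Real.log MeasureTheory.volume 1 (Real.pi / 2) := by
    apply ContinuousOn.intervalIntegrable
    apply Real.continuousOn_log.mono
    intro x hx
    rw [Set.uIcc_of_le (by nlinarith [Real.pi_gt_three])] at hx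
    simp only [Set.mem_compl_iff, Set.mem_singleton_iff]
    intro h
    rw [h] at hx
    exact absurd hx.1 (by norm_num)
  exact h1.trans h2

/-- abbreviation for the integrand -/
noncomputable def lobF (t : ℝ) : ℝ := Real.log |2 * Real.sin t|

lemma lobF_aesm : ∀ s : Set ℝ, AEStronglyMeasurable lobF (MeasureTheory.volume.restrict s) := by
  intro s
  exact ((Real.measurable_log.comp
    ((continuous_abs.comp (continuous_const.mul Real.continuous_sin)).measurable))).aestronglyMeasurable

lemma lobF_periodic : Function.Periodic lobF Real.pi := by
  intro x
  simp only [lobF, Real.sin_add_pi]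
  rw [show (2 : ℝ) * -Real.sin x = -(2 * Real.sin x) by ring, abs_neg]

lemma lobF_even (x : ℝ) : lobF (-x) = lobF x := by
  simp only [lobF, Real.sin_neg]
  rw [show (2 : ℝ) * -Real.sin x = -(2 * Real.sin x) by ring, abs_neg]

lemma lobF_integrable_first :
    IntervalIntegrable lobF MeasureTheory.volume 0 (Real.pi / 2) := by
  rw [intervalIntegrable_iff_integrableOn_Ioc_of_le Real.pi_div_two_pos.le]
  have hg : IntegrableOn (fun t => Real.log Real.pi - Real.log t)
      (Set.Ioc 0 (Real.pi / 2)) MeasureTheory.volume := by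
    have hlog : IntegrableOn Real.log (Set.Ioc 0 (Real.pi / 2)) MeasureTheory.volume := by
      have := log_intervalIntegrable_pi_div_two
      rwa [intervalIntegrable_iff_integrableOn_Ioc_of_le Real.pi_div_two_pos.le] at this
    exact ((integrableOn_const_iff).mpr (Or.inr measure_Ioc_lt_top)).sub hlog
  refine MeasureTheory.Integrable.mono hg (lobF_aesm _) ?_
  rw [MeasureTheory.ae_restrict_iff' measurableSet_Ioc]
  filter_upwards with t ht
  obtain ⟨ht0, ht2⟩ := ht
  have hsin : 0 < Real.sin t :=
    Real.sin_pos_of_pos_of_lt_pi ht0 (lt_of_le_of_lt ht2 (by linarith [Real.pi_pos]))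
  have habs : |2 * Real.sin t| = 2 * Real.sin t := abs_of_pos (by linarith)
  have hlow : 2 / Real.pi * t ≤ Real.sin t := Real.mul_le_sin ht0.le ht2
  have hπ := Real.pi_pos
  -- lobF t = log 2 + log (sin t)
  have hf : lobF t = Real.log 2 + Real.log (Real.sin t) := by
    rw [lobF, habs, Real.log_mul (by norm_num) (ne_of_gt hsin)]
  have hsinle : Real.log (Real.sin t) ≤ 0 := Real.log_nonpos hsin.le (Real.sin_le_one t)
  have hlowlog : Real.log 2 - Real.log Real.pi + Real.log t ≤ Real.log (Real.sin t) := by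
    have h2t : (0:ℝ) < 2 / Real.pi * t := by positivity
    have := Real.log_le_log h2t hlow
    rwa [Real.log_mul (ne_of_gt (by positivity)) (ne_of_gt ht0),
      Real.log_div (by norm_num) (ne_of_gt hπ)] at this
  have hlogt : Real.log t ≤ Real.log (Real.pi / 2) := Real.log_le_log ht0 ht2
  have hlogpi2 : Real.log (Real.pi / 2) = Real.log Real.pi - Real.log 2 :=
    Real.log_div (ne_of_gt hπ) (by norm_num)
  have hlog2 : (0:ℝ) ≤ Real.log 2 := Real.log_nonneg (by norm_num)
  rw [Real.norm_eq_abs, Real.norm_eq_abs, abs_le]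
  have hgpos : 0 ≤ Real.log Real.pi - Real.log t := by
    have : Real.log (Real.pi / 2) ≤ Real.log Real.pi :=
      Real.log_le_log (by positivity) (by linarith)
    linarith
  rw [abs_of_nonneg hgpos]
  constructor <;> rw [hf] <;> linarith

lemma lobF_integrable_half :
    IntervalIntegrable lobF MeasureTheory.volume (-(Real.pi / 2)) (Real.pi / 2) := by
  have h1 := lobF_integrable_first
  have h2 : IntervalIntegrable lobF MeasureTheory.volume (-(Real.pi / 2)) 0 := by
    have := (IntervalIntegrable.iff_comp_neg).mp h1
    simp only [lobF_even, neg_zero] at this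
    exact this.symm
  exact h2.trans h1

lemma lobF_integrable_nat (n : ℕ) :
    IntervalIntegrable lobF MeasureTheory.volume (-(Real.pi / 2)) (n * Real.pi + Real.pi / 2) := by
  induction n with
  | zero => simpa using lobF_integrable_half
  | succ n ih =>
    have hstep : IntervalIntegrable lobF MeasureTheory.volume
        ((n : ℝ) * Real.pi + Real.pi / 2) (((n : ℕ) + 1 : ℕ) * Real.pi + Real.pi / 2) := by
      have := lobF_integrable_half.comp_sub_right (((n : ℕ) + 1 : ℕ) * Real.pi)
      have heq : (fun x => lobF (x - ((n : ℕ) + 1 : ℕ) * Real.pi)) = lobF := by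
        funext x
        exact lobF_periodic.sub_nat_mul_eq (n + 1)
      rw [heq] at this
      have e1 : -(Real.pi/2) + ((n : ℕ) + 1 : ℕ) * Real.pi
          = (n : ℝ) * Real.pi + Real.pi/2 := by push_cast; ring
      have e2 : Real.pi/2 + ((n : ℕ) + 1 : ℕ) * Real.pi
          = (((n : ℕ) + 1 : ℕ) : ℝ) * Real.pi + Real.pi/2 := by ring
      rwa [e1, e2] at this
    exact ih.trans hstep

lemma lobF_integrable (a b : ℝ) : IntervalIntegrable lobF MeasureTheory.volume a b := by
  obtain ⟨n, hn⟩ := exists_nat_ge (|a| + |b|)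
  have hπ := Real.pi_gt_three
  set M : ℝ := n * Real.pi + Real.pi / 2 with hM
  have hnM : (n : ℝ) ≤ M := by
    have h1 : (n : ℝ) * 1 ≤ (n : ℝ) * Real.pi :=
      mul_le_mul_of_nonneg_left (by linarith) (Nat.cast_nonneg n)
    simp only [hM]
    linarith
  have haM : |a| ≤ M := by
    have := abs_nonneg b
    linarith
  have hbM : |b| ≤ M := by
    have := abs_nonneg a
    linarith
  have hbig : IntervalIntegrable lobF MeasureTheory.volume (-M) M := by
    have hN := lobF_integrable_nat n
    have hsym : IntervalIntegrable lobF MeasureTheory.volume (-M) (Real.pi / 2) := by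
      have := (IntervalIntegrable.iff_comp_neg).mp hN
      simp only [lobF_even] at this
      rw [show -(-(Real.pi / 2)) = Real.pi / 2 by ring] at this
      exact this.symm
    have hR : IntervalIntegrable lobF MeasureTheory.volume (Real.pi / 2) M := by
      apply hN.mono_set
      apply Set.uIcc_subset_uIcc _ Set.right_mem_uIcc
      rw [Set.mem_uIcc]
      left
      constructor
      · linarith
      · have h1 : (0:ℝ) ≤ (n : ℝ) * Real.pi :=
          mul_nonneg (Nat.cast_nonneg n) (by linarith)
        rw [hM]; linarith
    exact hsym.trans hR
  apply hbig.mono_set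
  have hM0 : -M ≤ M := by
    have : (0:ℝ) ≤ M := le_trans (abs_nonneg a) haM
    linarith
  apply Set.uIcc_subset_uIcc
  · rw [Set.mem_uIcc]
    left
    exact ⟨by linarith [neg_abs_le a], by linarith [le_abs_self a]⟩
  · rw [Set.mem_uIcc]
    left
    exact ⟨by linarith [neg_abs_le b], by linarith [le_abs_self b]⟩

/-- The Lobachevsky function is continuous on the real line. -/
theorem lob_continuous : Continuous lob := by
  have h : Continuous fun θ : ℝ => ∫ t in (0:ℝ)..θ, lobF t :=
    intervalIntegral.continuous_primitive lobF_integrable 0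
  exact h.neg
end

section
/- The Lobachevsky function is π-periodic: Λ(π) = 0 (equivalently ∫₀^π log(2 sin t) dt = 0), and for every real θ, Λ(θ + π) = Λ(θ). -/
open Real MeasureTheory

open Set intervalIntegral

lemma logIntOn01 : IntegrableOn Real.log (Ioc 0 1) volume := by
  have h : IntegrableOn (fun x : ℝ => -Real.log x) (Ioc (0:ℝ) 1) volume := by
    apply integrableOn_deriv_of_nonneg (g := fun x : ℝ => x - x * Real.log x)
    · exact (continuous_id.sub Real.continuous_mul_log).continuousOn
    · intro x hx
      have h1 : HasDerivAt (fun x : ℝ => x * Real.log x) (Real.log x + 1) x := by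
        exact ((hasDerivAt_id' x).mul (Real.hasDerivAt_log hx.1.ne')).congr_deriv
          (by rw [one_mul, mul_inv_cancel₀ hx.1.ne'])
      exact ((hasDerivAt_id' x).sub h1).congr_deriv (by ring)
    · intro x hx
      simp only [neg_nonneg]
      exact Real.log_nonpos hx.1.le hx.2.le
  exact h.neg.congr (Filter.Eventually.of_forall fun x => by simp)

lemma logIntOn (b : ℝ) : IntegrableOn Real.log (Ioc 0 b) volume := by
  rcases le_or_gt b 1 with hb | hb
  · exact logIntOn01.mono_set (Ioc_subset_Ioc_right hb)
  · have h2 : IntegrableOn Real.log (Icc 1 b) volume :=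
      (Real.continuousOn_log.mono (by intro x hx; simp; linarith [hx.1])).integrableOn_Icc
    exact (logIntOn01.union h2).mono_set (by
      intro x hx
      rcases le_or_gt x 1 with h | h
      · exact Or.inl ⟨hx.1, h⟩
      · exact Or.inr ⟨h.le, hx.2⟩)

noncomputable def Flob (t : ℝ) : ℝ := Real.log |2 * Real.sin t|

lemma Flob_per : Function.Periodic Flob Real.pi := by
  intro x; unfold Flob; rw [Real.sin_add_pi, mul_neg, abs_neg]

lemma Flob_pi_sub (x : ℝ) : Flob (Real.pi - x) = Flob x := by
  unfold Flob; rw [Real.sin_pi_sub]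

lemma Flob_meas : Measurable Flob :=
  Real.measurable_log.comp ((measurable_const.mul Real.measurable_sin).abs)

lemma Flob_int_half : IntervalIntegrable Flob volume 0 (Real.pi / 2) := by
  have hpi2 : (0:ℝ) ≤ Real.pi / 2 := by positivity
  rw [intervalIntegrable_iff_integrableOn_Ioo_of_le hpi2]
  have hg : IntegrableOn (fun t : ℝ => |Real.log t| + (Real.log 2 + Real.log Real.pi))
      (Ioo 0 (Real.pi / 2)) volume := by
    apply Integrable.add
    · exact (((logIntOn (Real.pi / 2)).mono_set Ioo_subset_Ioc_self).abs)
    · exact integrableOn_const measure_Ioo_lt_top.ne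
  refine Integrable.mono' hg Flob_meas.aestronglyMeasurable ?_
  rw [ae_restrict_iff' measurableSet_Ioo]
  refine Filter.Eventually.of_forall fun t ht => ?_
  obtain ⟨ht0, ht2⟩ := ht
  have hsin : 0 < Real.sin t := Real.sin_pos_of_pos_of_lt_pi ht0 (by linarith [Real.pi_pos])
  have habs : |2 * Real.sin t| = 2 * Real.sin t := abs_of_pos (by linarith)
  have hF : Flob t = Real.log 2 + Real.log (Real.sin t) := by
    unfold Flob; rw [habs, Real.log_mul two_ne_zero hsin.ne']
  have hupper : Real.log (Real.sin t) ≤ Real.log t :=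
    Real.log_le_log hsin (Real.sin_le ht0.le)
  have hlower : Real.log t + (Real.log 2 - Real.log Real.pi) ≤ Real.log (Real.sin t) := by
    have h1 : 2 / Real.pi * t ≤ Real.sin t := Real.mul_le_sin ht0.le ht2.le
    have h2 : Real.log (2 / Real.pi * t) ≤ Real.log (Real.sin t) :=
      Real.log_le_log (by positivity) h1
    rw [Real.log_mul (by positivity) ht0.ne', Real.log_div two_ne_zero Real.pi_ne_zero] at h2
    linarith
  have hlog2 : (0:ℝ) ≤ Real.log 2 := Real.log_nonneg one_le_two
  have hlogpi : (0:ℝ) ≤ Real.log Real.pi := Real.log_nonneg (by linarith [Real.pi_gt_three])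
  rw [hF, Real.norm_eq_abs, abs_le]
  constructor
  · have := neg_abs_le (Real.log t); linarith
  · have := le_abs_self (Real.log t); linarith

lemma Flob_int_pi : IntervalIntegrable Flob volume 0 Real.pi := by
  refine Flob_int_half.trans ?_
  have h := (Flob_int_half.comp_sub_left Real.pi).symm
  have he : (fun x => Flob (Real.pi - x)) = Flob := funext Flob_pi_sub
  rw [he] at h
  have : Real.pi - Real.pi / 2 = Real.pi / 2 := by ring
  rwa [this, sub_zero] at h

lemma Flob_int_unit (k : ℤ) :
    IntervalIntegrable Flob volume (k * Real.pi) (k * Real.pi + Real.pi) := by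
  have h := Flob_int_pi.comp_sub_right (k * Real.pi)
  have he : (fun x => Flob (x - k * Real.pi)) = Flob :=
    funext fun x => Flob_per.sub_int_mul_eq k
  rw [he] at h
  simpa [add_comm] using h

lemma Flob_int_chain (n : ℕ) (k : ℤ) :
    IntervalIntegrable Flob volume (k * Real.pi) (k * Real.pi + n * Real.pi) := by
  induction n with
  | zero => simp
  | succ n ih =>
      refine ih.trans ?_
      have h := Flob_int_unit (k + n)
      have e1 : ((k + n : ℤ) : ℝ) * Real.pi = k * Real.pi + n * Real.pi := by push_cast; ring
      rw [e1] at h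
      push_cast
      have e2 : (k:ℝ) * Real.pi + (n + 1) * Real.pi = k * Real.pi + n * Real.pi + Real.pi := by
        ring
      rw [e2]
      exact h

lemma Flob_int (a b : ℝ) : IntervalIntegrable Flob volume a b := by
  set m := min a b
  set M := max a b
  set k : ℤ := ⌊m / Real.pi⌋
  set n : ℕ := ⌈(M - k * Real.pi) / Real.pi⌉₊
  have hpi := Real.pi_pos
  have h1 : (k : ℝ) * Real.pi ≤ m := by
    rw [← le_div_iff₀ hpi]
    exact_mod_cast Int.floor_le (m / Real.pi)
  have h2 : M ≤ k * Real.pi + n * Real.pi := by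
    have := Nat.le_ceil ((M - k * Real.pi) / Real.pi)
    rw [div_le_iff₀ hpi] at this
    linarith
  have h3 : (k:ℝ) * Real.pi ≤ k * Real.pi + n * Real.pi := by
    have : (0:ℝ) ≤ n * Real.pi := by positivity
    linarith
  refine (Flob_int_chain n k).mono_set ?_
  rw [uIcc_of_le h3]
  refine uIcc_subset_Icc ?_ ?_
  · exact ⟨le_trans h1 (min_le_left a b), le_trans (le_max_left a b) h2⟩
  · exact ⟨le_trans h1 (min_le_right a b), le_trans (le_max_right a b) h2⟩

lemma Flob_int_half_pi : IntervalIntegrable Flob volume (Real.pi / 2) Real.pi := by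
  have h := (Flob_int_half.comp_sub_left Real.pi).symm
  have he : (fun x => Flob (Real.pi - x)) = Flob := funext Flob_pi_sub
  rw [he] at h
  have e : Real.pi - Real.pi / 2 = Real.pi / 2 := by ring
  rwa [e, sub_zero] at h

lemma Flob_cos_int : IntervalIntegrable (fun x => Real.log |2 * Real.cos x|) volume 0
    (Real.pi / 2) := by
  have h := (Flob_int_half.comp_sub_left (Real.pi / 2)).symm
  have he : (fun x => Flob (Real.pi / 2 - x)) = fun x => Real.log |2 * Real.cos x| :=
    funext fun x => by unfold Flob; rw [Real.sin_pi_div_two_sub]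
  rw [he] at h
  have e : Real.pi / 2 - Real.pi / 2 = 0 := by ring
  rwa [e, sub_zero] at h

lemma Flob_cos_eq :
    ∫ x in (0:ℝ)..(Real.pi / 2), Real.log |2 * Real.cos x| =
      ∫ x in (0:ℝ)..(Real.pi / 2), Flob x := by
  have he : (fun x => Real.log |2 * Real.cos x|) = fun x => Flob (Real.pi / 2 - x) :=
    funext fun x => by unfold Flob; rw [Real.sin_pi_div_two_sub]
  rw [he, intervalIntegral.integral_comp_sub_left Flob (Real.pi / 2)]
  norm_num

lemma Flob_upper_eq :
    ∫ x in (Real.pi / 2)..Real.pi, Flob x = ∫ x in (0:ℝ)..(Real.pi / 2), Flob x := by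
  have h := intervalIntegral.integral_comp_sub_left (a := Real.pi / 2) (b := Real.pi)
    Flob Real.pi
  simp only [Flob_pi_sub] at h
  rw [h, sub_self, (by ring : Real.pi - Real.pi / 2 = Real.pi / 2)]

lemma Flob_integral_pi : ∫ x in (0:ℝ)..Real.pi, Flob x = 0 := by
  set J := ∫ x in (0:ℝ)..(Real.pi / 2), Flob x with hJ
  have hpi := Real.pi_pos
  -- I = 2 J
  have hI2 : ∫ x in (0:ℝ)..Real.pi, Flob x = 2 * J := by
    rw [← intervalIntegral.integral_add_adjacent_intervals Flob_int_half Flob_int_half_pi,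
      Flob_upper_eq, ← hJ]
    ring
  -- doubling formula: I = 2 * ∫ F(2x)
  have hdouble : 2 * ∫ x in (0:ℝ)..(Real.pi / 2), Flob (2 * x) = ∫ x in (0:ℝ)..Real.pi, Flob x := by
    have h := intervalIntegral.mul_integral_comp_mul_left (a := (0:ℝ)) (b := Real.pi / 2)
      (f := Flob) 2
    rw [h, (by ring : (2:ℝ) * 0 = 0), (by ring : (2:ℝ) * (Real.pi / 2) = Real.pi)]
  -- F(2x) = F x + log |2 cos x| a.e. on (0, π/2]
  have hsplit : ∫ x in (0:ℝ)..(Real.pi / 2), Flob (2 * x) =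
      ∫ x in (0:ℝ)..(Real.pi / 2), (Flob x + Real.log |2 * Real.cos x|) := by
    apply intervalIntegral.integral_congr_ae
    have h0 : ∀ᵐ x : ℝ, x ≠ Real.pi / 2 := by
      rw [ae_iff]
      convert Real.volume_singleton (a := Real.pi / 2)
      ext x; simp
    filter_upwards [h0] with x hx hxm
    rw [Set.uIoc_of_le (by positivity : (0:ℝ) ≤ Real.pi / 2)] at hxm
    have hx0 : 0 < x := hxm.1
    have hx2 : x < Real.pi / 2 := lt_of_le_of_ne hxm.2 hx
    have hsin : 0 < Real.sin x := Real.sin_pos_of_pos_of_lt_pi hx0 (by linarith)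
    have hcos : 0 < Real.cos x := Real.cos_pos_of_mem_Ioo ⟨by linarith, hx2⟩
    unfold Flob
    rw [Real.sin_two_mul]
    have he : 2 * (2 * Real.sin x * Real.cos x) = (2 * Real.sin x) * (2 * Real.cos x) := by ring
    rw [he, abs_mul, Real.log_mul (by positivity) (by positivity)]
  have hadd : ∫ x in (0:ℝ)..(Real.pi / 2), (Flob x + Real.log |2 * Real.cos x|) =
      J + ∫ x in (0:ℝ)..(Real.pi / 2), Real.log |2 * Real.cos x| :=
    intervalIntegral.integral_add Flob_int_half Flob_cos_int
  have hI4 : ∫ x in (0:ℝ)..Real.pi, Flob x = 4 * J := by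
    rw [← hdouble, hsplit, hadd, Flob_cos_eq, ← hJ]
    ring
  linarith [hI2, hI4]

/-- The Lobachevsky function is `π`-periodic: `Λ(π) = 0` and
`Λ(θ + π) = Λ(θ)` for every real `θ`. -/
theorem lob_periodic : lob Real.pi = 0 ∧ ∀ θ : ℝ, lob (θ + Real.pi) = lob θ := by
  have hint : ∀ a b : ℝ, IntervalIntegrable (fun t => Real.log |2 * Real.sin t|) volume a b :=
    Flob_int
  constructor
  · show -∫ t in (0:ℝ)..Real.pi, Real.log |2 * Real.sin t| = 0
    have : ∫ t in (0:ℝ)..Real.pi, Real.log |2 * Real.sin t| = 0 := Flob_integral_pi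
    rw [this, neg_zero]
  · intro θ
    show -∫ t in (0:ℝ)..(θ + Real.pi), Real.log |2 * Real.sin t| =
      -∫ t in (0:ℝ)..θ, Real.log |2 * Real.sin t|
    have hsplit := intervalIntegral.integral_add_adjacent_intervals
      (Flob_int 0 θ) (Flob_int θ (θ + Real.pi))
    have hper : ∫ t in θ..(θ + Real.pi), Flob t = ∫ t in (0:ℝ)..(0 + Real.pi), Flob t :=
      Flob_per.intervalIntegral_add_eq θ 0
    rw [zero_add] at hper
    have : ∫ t in (0:ℝ)..(θ + Real.pi), Flob t = ∫ t in (0:ℝ)..θ, Flob t := by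
      rw [← hsplit, hper, Flob_integral_pi, add_zero]
    exact congrArg Neg.neg this
end

section
/- The Lobachevsky function satisfies the duplication identity: for every real θ, Λ(2θ) = 2Λ(θ) + 2Λ(θ + π/2). -/
open Real MeasureTheory Set intervalIntegral

namespace LobAux

/-- `log` is interval integrable on `[0,1]`. -/
lemma log_intInt01 : IntervalIntegrable Real.log volume 0 1 := by
  have h : IntervalIntegrable (fun x : ℝ => -Real.log x) volume 0 1 := by
    apply intervalIntegral.intervalIntegrable_deriv_of_nonneg
      (g := fun x : ℝ => x - x * Real.log x)
    · exact (continuous_id.sub Real.continuous_mul_log).continuousOn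
    · intro x hx
      simp only [min_self, zero_le_one, min_eq_left, max_eq_right, mem_Ioo] at hx
      have hx0 : x ≠ 0 := ne_of_gt hx.1
      have h1 : HasDerivAt (fun x : ℝ => x - x * Real.log x)
          (1 - (1 * Real.log x + x * x⁻¹)) x :=
        (hasDerivAt_id x).sub ((hasDerivAt_id x).mul (Real.hasDerivAt_log hx0))
      convert h1 using 1
      field_simp
      ring
    · intro x hx
      simp only [zero_le_one, min_eq_left, max_eq_right, mem_Ioo] at hx
      have := Real.log_nonpos hx.1.le hx.2.le
      linarith
  have h2 := h.neg
  have heq : (-fun x : ℝ => -Real.log x) = Real.log := by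
    funext x; simp
  rwa [heq] at h2

/-- `-log` is interval integrable on `[0, π/2]`. -/
lemma neg_log_intInt : IntervalIntegrable (fun x : ℝ => -Real.log x) volume 0 (π / 2) := by
  refine (log_intInt01.neg).trans ?_
  have h : IntervalIntegrable Real.log volume 1 (π / 2) := by
    apply intervalIntegrable_log
    intro hmem
    have h1 : (1:ℝ) ≤ π / 2 := by nlinarith [Real.pi_gt_three]
    rw [uIcc_of_le h1] at hmem
    exact absurd hmem.1 (by norm_num)
  exact h.neg

lemma f_meas : Measurable (fun t : ℝ => Real.log |Real.sin t|) :=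
  Real.measurable_log.comp (Real.continuous_sin.measurable.abs)

/-- `log |sin|` is interval integrable on `[0, π/2]`. -/
lemma logsin_intInt_half : IntervalIntegrable (fun t : ℝ => Real.log |Real.sin t|)
    volume 0 (π / 2) := by
  have hG : IntervalIntegrable (fun x : ℝ => -Real.log x + Real.log (π / 2)) volume 0 (π / 2) :=
    neg_log_intInt.add intervalIntegrable_const
  apply hG.mono_fun' (f_meas.aestronglyMeasurable)
  have hpos : (0:ℝ) ≤ π / 2 := by positivity
  rw [uIoc_of_le hpos]
  filter_upwards [ae_restrict_mem measurableSet_Ioc] with x hx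
  have hx0 : 0 < x := hx.1
  have hxpi : x ≤ π / 2 := hx.2
  have hsin_pos : 0 < Real.sin x :=
    Real.sin_pos_of_pos_of_lt_pi hx0 (lt_of_le_of_lt hxpi (by nlinarith [Real.pi_pos]))
  have hsin_le : Real.sin x ≤ 1 := Real.sin_le_one x
  have hlow : 2 / π * x ≤ Real.sin x := Real.mul_le_sin hx0.le hxpi
  have hlow_pos : 0 < 2 / π * x := by positivity
  have h1 : Real.log (Real.sin x) ≤ 0 := Real.log_nonpos hsin_pos.le hsin_le
  have h2 : Real.log (2 / π * x) ≤ Real.log (Real.sin x) :=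
    Real.log_le_log hlow_pos hlow
  have h3 : Real.log (2 / π * x) = -Real.log (π / 2) + Real.log x := by
    rw [Real.log_mul (by positivity) (ne_of_gt hx0)]
    rw [show (2:ℝ) / π = (π / 2)⁻¹ by field_simp]
    rw [Real.log_inv]
  have habs : |Real.sin x| = Real.sin x := abs_of_pos hsin_pos
  rw [habs]
  simp only [Real.norm_eq_abs]
  rw [abs_of_nonpos h1]
  linarith

/-- `log |sin|` is interval integrable on `[0, π]`. -/
lemma logsin_intInt_pi : IntervalIntegrable (fun t : ℝ => Real.log |Real.sin t|)
    volume 0 π := by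
  have h2 : IntervalIntegrable (fun t : ℝ => Real.log |Real.sin t|) volume (π / 2) π := by
    have h := logsin_intInt_half.comp_sub_left π
    have heq : (fun x : ℝ => Real.log |Real.sin (π - x)|)
        = fun t : ℝ => Real.log |Real.sin t| := by
      funext x; rw [Real.sin_pi_sub]
    rw [heq] at h
    have h' := h.symm
    rw [show π - π / 2 = π / 2 by ring, show π - 0 = π by ring] at h'
    exact h'
  have := logsin_intInt_half.trans h2
  simpa using this

lemma logsin_shift (k : ℤ) (x : ℝ) :
    Real.log |Real.sin (x - k * π)| = Real.log |Real.sin x| := by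
  have hs : Real.sin ((k:ℝ) * π) = 0 := Real.sin_int_mul_pi k
  have hc : Real.cos ((k:ℝ) * π) = 1 ∨ Real.cos ((k:ℝ) * π) = -1 :=
    Real.sin_eq_zero_iff_cos_eq.1 hs
  rcases hc with hc | hc <;>
    simp [Real.sin_sub, hs, hc, abs_neg]

/-- `log |sin|` is interval integrable on each period block. -/
lemma logsin_intInt_block (k : ℤ) : IntervalIntegrable (fun t : ℝ => Real.log |Real.sin t|)
    volume (k * π) (k * π + π) := by
  have h := logsin_intInt_pi.comp_sub_right (k * π)
  have heq : (fun x : ℝ => Real.log |Real.sin (x - k * π)|)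
      = fun t : ℝ => Real.log |Real.sin t| := by
    funext x; exact logsin_shift k x
  rw [heq] at h
  simpa [add_comm] using h

/-- `log |sin|` is interval integrable on every interval. -/
lemma logsin_intInt (a b : ℝ) : IntervalIntegrable (fun t : ℝ => Real.log |Real.sin t|)
    volume a b := by
  have hn : ∀ n : ℕ, IntervalIntegrable (fun t : ℝ => Real.log |Real.sin t|)
      volume (-(n * π)) (n * π) := by
    intro n
    induction n with
    | zero => simp
    | succ n ih =>
      have hleft := logsin_intInt_block (-(n+1) : ℤ)
      have hright := logsin_intInt_block (n : ℤ)
      have hleft' : IntervalIntegrable (fun t : ℝ => Real.log |Real.sin t|)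
          volume (-(((n:ℕ)+1 : ℕ) * π)) (-((n:ℕ) * π)) := by
        rw [show (((-(n+1):ℤ)):ℝ) * π = -(((n:ℕ)+1 : ℕ) * π) by push_cast; ring] at hleft
        rw [show (-(((n:ℕ)+1 : ℕ) * π) + π : ℝ) = -((n:ℕ) * π) by push_cast; ring] at hleft
        exact hleft
      have hright' : IntervalIntegrable (fun t : ℝ => Real.log |Real.sin t|)
          volume ((n:ℕ) * π) (((n:ℕ)+1 : ℕ) * π) := by
        rw [show (((n:ℤ)):ℝ) * π = ((n:ℕ) : ℝ) * π by push_cast; ring] at hright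
        rw [show (((n:ℕ):ℝ) * π + π : ℝ) = (((n:ℕ)+1 : ℕ) : ℝ) * π by push_cast; ring] at hright
        exact hright
      exact (hleft'.trans ih).trans hright'
  obtain ⟨n, hnn⟩ := exists_nat_ge (max |a| |b| / π)
  have hπ : (0:ℝ) < π := Real.pi_pos
  have hbound : max |a| |b| ≤ n * π := by
    rw [div_le_iff₀ hπ] at hnn; linarith
  have ha' : a ∈ Icc (-(n * π)) ((n:ℝ) * π) := by
    constructor
    · have : |a| ≤ n * π := le_trans (le_max_left _ _) hbound
      linarith [neg_abs_le a]
    · exact le_trans (le_abs_self a) (le_trans (le_max_left _ _) hbound)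
  have hb' : b ∈ Icc (-(n * π)) ((n:ℝ) * π) := by
    constructor
    · have : |b| ≤ n * π := le_trans (le_max_right _ _) hbound
      linarith [neg_abs_le b]
    · exact le_trans (le_abs_self b) (le_trans (le_max_right _ _) hbound)
  apply (hn n).mono_set
  rw [uIcc_of_le (by linarith [ha'.1, ha'.2] : -((n:ℝ) * π) ≤ (n:ℝ) * π)]
  exact uIcc_subset_Icc ha' hb'

/-- The integrand of `lob` is interval integrable on every interval. -/
lemma f2_intInt (a b : ℝ) : IntervalIntegrable (fun t : ℝ => Real.log |2 * Real.sin t|)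
    volume a b := by
  have hG : IntervalIntegrable (fun t : ℝ => |Real.log 2| + abs (Real.log |Real.sin t|))
      volume a b := intervalIntegrable_const.add (logsin_intInt a b).abs
  apply hG.mono_fun'
    ((Real.measurable_log.comp ((measurable_const.mul Real.continuous_sin.measurable).abs)).aestronglyMeasurable)
  filter_upwards with x
  simp only [Real.norm_eq_abs, Function.comp_apply, Pi.mul_apply]
  by_cases hs : Real.sin x = 0
  · rw [hs, mul_zero, abs_zero, Real.log_zero, abs_zero]
    positivity
  · have : |2 * Real.sin x| = 2 * |Real.sin x| := by
      rw [abs_mul]; norm_num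
    rw [this, Real.log_mul (by norm_num) (abs_ne_zero.2 hs)]
    exact (abs_add_le _ _)

lemma sin_ne_zero_ae : ∀ᵐ x : ℝ, Real.sin x ≠ 0 := by
  have hz : {x : ℝ | Real.sin x = 0} = Set.range (fun n : ℤ => (n:ℝ) * π) := by
    ext x
    simp only [mem_setOf_eq, Set.mem_range]
    exact Real.sin_eq_zero_iff
  have h0 : volume {x : ℝ | Real.sin x = 0} = 0 := by
    rw [hz]
    exact (Set.countable_range _).measure_zero _
  rw [ae_iff]
  simpa only [ne_eq, not_not] using h0

lemma cos_ne_zero_ae : ∀ᵐ x : ℝ, Real.cos x ≠ 0 := by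
  have hz : {x : ℝ | Real.cos x = 0} ⊆ Set.range (fun n : ℤ => (2 * (n:ℝ) + 1) * π / 2) := by
    intro x hx
    simp only [mem_setOf_eq] at hx
    obtain ⟨n, hn⟩ := Real.cos_eq_zero_iff.1 hx
    exact ⟨n, hn.symm⟩
  have h0 : volume {x : ℝ | Real.cos x = 0} = 0 :=
    measure_mono_null hz ((Set.countable_range _).measure_zero _)
  rw [ae_iff]
  simpa only [ne_eq, not_not] using h0

/-- Shorthand for the integral defining `lob`. -/
noncomputable def F (x : ℝ) : ℝ := ∫ t in (0:ℝ)..x, Real.log |2 * Real.sin t|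

lemma key (θ : ℝ) : F (2 * θ) = 2 * F θ + 2 * (F (θ + π / 2) - F (π / 2)) := by
  have h1 : ∫ t in (0:ℝ)..θ, Real.log |2 * Real.sin (2 * t)|
      = (2:ℝ)⁻¹ * ∫ x in (0:ℝ)..(2*θ), Real.log |2 * Real.sin x| := by
    have := intervalIntegral.integral_comp_mul_left
      (a := (0:ℝ)) (b := θ) (fun x => Real.log |2 * Real.sin x|) (two_ne_zero)
    simpa using this
  have h2 : ∫ t in (0:ℝ)..θ, Real.log |2 * Real.sin (2 * t)|
      = ∫ t in (0:ℝ)..θ, (Real.log |2 * Real.sin t| + Real.log |2 * Real.sin (t + π/2)|) := by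
    apply intervalIntegral.integral_congr_ae
    filter_upwards [sin_ne_zero_ae, cos_ne_zero_ae] with x hs hc _
    have hsin2 : Real.sin (2 * x) = 2 * Real.sin x * Real.cos x := Real.sin_two_mul x
    have e1 : (2:ℝ) * Real.sin (2 * x) = (2 * Real.sin x) * (2 * Real.cos x) := by
      rw [hsin2]; ring
    have e2 : Real.sin (x + π/2) = Real.cos x := Real.sin_add_pi_div_two x
    rw [e1, abs_mul, Real.log_mul (abs_ne_zero.2 (by simpa using hs))
      (abs_ne_zero.2 (by simpa using hc)), e2]
  have hshift : IntervalIntegrable (fun t : ℝ => Real.log |2 * Real.sin (t + π/2)|)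
      volume 0 θ := by
    have h := (f2_intInt (π/2) (θ + π/2)).comp_add_right (π/2)
    simpa using h
  have h3 : ∫ t in (0:ℝ)..θ, (Real.log |2 * Real.sin t| + Real.log |2 * Real.sin (t + π/2)|)
      = (∫ t in (0:ℝ)..θ, Real.log |2 * Real.sin t|)
        + ∫ t in (0:ℝ)..θ, Real.log |2 * Real.sin (t + π/2)| :=
    intervalIntegral.integral_add (f2_intInt 0 θ) hshift
  have h4 : ∫ t in (0:ℝ)..θ, Real.log |2 * Real.sin (t + π/2)|
      = ∫ t in (π/2 : ℝ)..(θ + π/2), Real.log |2 * Real.sin t| := by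
    have := intervalIntegral.integral_comp_add_right
      (a := (0:ℝ)) (b := θ) (fun x => Real.log |2 * Real.sin x|) (π/2)
    simpa using this
  have h5 : F (π/2) + (∫ t in (π/2 : ℝ)..(θ + π/2), Real.log |2 * Real.sin t|)
      = F (θ + π/2) :=
    intervalIntegral.integral_add_adjacent_intervals (f2_intInt 0 (π/2))
      (f2_intInt (π/2) (θ + π/2))
  have hF2 : F (2 * θ) = 2 * ∫ t in (0:ℝ)..θ, Real.log |2 * Real.sin (2 * t)| := by
    rw [h1]; unfold F; ring
  rw [hF2, h2, h3, h4]
  unfold F at h5 ⊢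
  linarith

lemma F_pi_div_two : F (π / 2) = 0 := by
  have hkey := key (π / 2)
  have h2 : (2:ℝ) * (π / 2) = π := by ring
  have h3 : π / 2 + π / 2 = π := by ring
  rw [h2, h3] at hkey
  -- hkey : F π = 2 * F (π/2) + 2 * (F π - F (π/2)), so F π = 0
  have hFpi : F π = 0 := by linarith
  -- symmetry: ∫_{π/2}^{π} = ∫_{0}^{π/2}
  have hsym : ∫ t in (π/2 : ℝ)..π, Real.log |2 * Real.sin t|
      = ∫ t in (0:ℝ)..(π/2), Real.log |2 * Real.sin t| := by
    have h := intervalIntegral.integral_comp_sub_left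
      (a := (0:ℝ)) (b := π/2) (fun x => Real.log |2 * Real.sin x|) π
    have heq : ∀ x : ℝ, Real.log |2 * Real.sin (π - x)| = Real.log |2 * Real.sin x| := by
      intro x; rw [Real.sin_pi_sub]
    simp only [heq] at h
    rw [show π - π / 2 = π / 2 by ring, show π - 0 = π by ring] at h
    exact h.symm
  have hadd : F (π/2) + (∫ t in (π/2 : ℝ)..π, Real.log |2 * Real.sin t|) = F π :=
    intervalIntegral.integral_add_adjacent_intervals (f2_intInt 0 (π/2))
      (f2_intInt (π/2) π)
  rw [hsym] at hadd
  unfold F at hadd hFpi ⊢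
  linarith

end LobAux

/-- The duplication identity for the Lobachevsky function:
`Λ(2θ) = 2Λ(θ) + 2Λ(θ + π/2)` for every real `θ`. -/
theorem lob_duplication (θ : ℝ) :
    lob (2 * θ) = 2 * lob θ + 2 * lob (θ + Real.pi / 2) := by
  have hkey := LobAux.key θ
  have h0 := LobAux.F_pi_div_two
  unfold LobAux.F at hkey h0
  unfold lob
  linarith
end

section
/- For every natural number n ≥ 3, the volume 2nΛ(π/n) of the regular ideal n-gonal bipyramid satisfies 2nΛ(π/n) ≤ 2π·log(n/2). -/
open Real MeasureTheory

lemma aux_sin_lb {t : ℝ} (ht : 0 < t) (ht' : t ≤ 1.05) :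
    t ≤ Real.sin t * (1 + t ^ 2 / 4) := by
  have h2 : t / 2 ≤ 1 := by linarith
  have hs := Real.sin_gt_sub_cube (by linarith : 0 < t / 2)
  have hc := Real.one_sub_sq_div_two_le_cos (x := t / 2)
  have hcpos : (0:ℝ) < 1 - (t / 2) ^ 2 / 2 := by nlinarith
  have hspos : (0:ℝ) < t / 2 - (t / 2) ^ 3 / 4 := by nlinarith
  have hsin : Real.sin t = 2 * (Real.sin (t / 2) * Real.cos (t / 2)) := by
    have := Real.sin_two_mul (t / 2)
    rw [show 2 * (t / 2) = t by ring] at this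
    linarith
  have hkey : (t / 2 - (t / 2) ^ 3 / 4) * (1 - (t / 2) ^ 2 / 2)
      ≤ Real.sin (t / 2) * Real.cos (t / 2) :=
    mul_le_mul (by have := pow_pos (by linarith : (0:ℝ) < t / 2) 3; linarith) hc hcpos.le (by linarith : (0:ℝ) ≤ Real.sin (t / 2))
  have hu : t ^ 2 ≤ 1.1025 := by nlinarith
  have hpoly : t ≤ 2 * ((t / 2 - (t / 2) ^ 3 / 4) * (1 - (t / 2) ^ 2 / 2)) * (1 + t ^ 2 / 4) := by
    nlinarith [mul_pos (mul_pos ht ht) ht,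
      mul_nonneg (mul_nonneg (mul_nonneg ht.le ht.le) ht.le) (sub_nonneg.2 hu),
      pow_nonneg ht.le 7, sq_nonneg t]
  have hmul : 2 * ((t / 2 - (t / 2) ^ 3 / 4) * (1 - (t / 2) ^ 2 / 2)) * (1 + t ^ 2 / 4)
      ≤ 2 * (Real.sin (t / 2) * Real.cos (t / 2)) * (1 + t ^ 2 / 4) := by
    have hr : (0:ℝ) ≤ 1 + t ^ 2 / 4 := by positivity
    nlinarith [mul_le_mul_of_nonneg_right hkey hr]
  calc t ≤ 2 * ((t / 2 - (t / 2) ^ 3 / 4) * (1 - (t / 2) ^ 2 / 2)) * (1 + t ^ 2 / 4) := hpoly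
    _ ≤ 2 * (Real.sin (t / 2) * Real.cos (t / 2)) * (1 + t ^ 2 / 4) := hmul
    _ = Real.sin t * (1 + t ^ 2 / 4) := by rw [hsin]

lemma aux_pointwise {t : ℝ} (ht : 0 < t) (ht' : t ≤ 1.05) :
    Real.log 2 + Real.log t - t ^ 2 / 4 ≤ Real.log |2 * Real.sin t| := by
  have htpi : t < Real.pi := lt_of_le_of_lt ht' (by nlinarith [Real.pi_gt_three])
  have hsinpos : 0 < Real.sin t := Real.sin_pos_of_pos_of_lt_pi ht htpi
  rw [abs_of_pos (by positivity), Real.log_mul two_ne_zero hsinpos.ne']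
  have key : Real.log t - Real.log (Real.sin t) ≤ t ^ 2 / 4 := by
    rw [← Real.log_div ht.ne' hsinpos.ne']
    rw [Real.log_le_iff_le_exp (by positivity)]
    have h1 : t / Real.sin t ≤ 1 + t ^ 2 / 4 := by
      rw [div_le_iff₀ hsinpos]
      calc t ≤ Real.sin t * (1 + t ^ 2 / 4) := aux_sin_lb ht ht'
        _ = (1 + t ^ 2 / 4) * Real.sin t := by ring
    have h2 := Real.add_one_le_exp (t ^ 2 / 4)
    linarith
  linarith

lemma aux_log_integrable {θ : ℝ} (hθ : 0 < θ) :
    IntervalIntegrable Real.log volume 0 1 ∧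
      IntervalIntegrable Real.log volume 0 θ := by
  have h01 : IntervalIntegrable Real.log volume 0 1 := by
    have hmain : IntervalIntegrable (fun t : ℝ => -Real.log t) volume 0 1 := by
      apply intervalIntegral.intervalIntegrable_deriv_of_nonneg
        (g := fun t : ℝ => t - t * Real.log t)
      · exact (continuous_id.sub Real.continuous_mul_log).continuousOn
      · intro x hx
        rw [show min (0:ℝ) 1 = 0 by norm_num, show max (0:ℝ) 1 = 1 by norm_num] at hx
        have hx0 : x ≠ 0 := ne_of_gt hx.1
        have := (hasDerivAt_id x).sub (Real.hasDerivAt_mul_log hx0)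
        exact this.congr_deriv (by ring)
      · intro x hx
        rw [show min (0:ℝ) 1 = 0 by norm_num, show max (0:ℝ) 1 = 1 by norm_num] at hx
        simp only [neg_nonneg]
        exact Real.log_nonpos hx.1.le hx.2.le
    have heq : Real.log = -(fun t : ℝ => -Real.log t) := by funext t; simp
    rw [heq]; exact hmain.neg
  refine ⟨h01, h01.trans ?_⟩
  exact intervalIntegral.intervalIntegrable_log (Set.notMem_uIcc_of_lt one_pos hθ)

lemma lob_le {θ : ℝ} (h0 : 0 < θ) (h1 : θ ≤ 1.05) :
    lob θ ≤ θ - θ * Real.log 2 - θ * Real.log θ + θ ^ 3 / 12 := by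
  set f : ℝ → ℝ := fun t => Real.log |2 * Real.sin t| with hf
  set g : ℝ → ℝ := fun t => Real.log 2 + Real.log t - t ^ 2 / 4 with hg
  by_cases hI : IntervalIntegrable f volume 0 θ
  · -- integrable case
    have hlogint := (aux_log_integrable h0).2
    have hgint : IntervalIntegrable g volume 0 θ := by
      have hpoly : IntervalIntegrable (fun t : ℝ => t ^ 2 / 4) volume 0 θ :=
        Continuous.intervalIntegrable (by continuity) 0 θ
      have hcst : IntervalIntegrable (fun _ : ℝ => Real.log 2) volume 0 θ :=
        intervalIntegrable_const
      exact (hcst.add hlogint).sub hpoly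
    have hae : g ≤ᵐ[volume.restrict (Set.Icc 0 θ)] f := by
      have hne : ∀ᵐ (t : ℝ) ∂(volume.restrict (Set.Icc 0 θ)), t ≠ 0 := by
        refine Filter.Eventually.filter_mono (ae_mono Measure.restrict_le_self) ?_
        rw [ae_iff]
        have : {a : ℝ | ¬a ≠ 0} = {0} := by ext x; simp
        rw [this]
        exact measure_singleton 0
      filter_upwards [hne, ae_restrict_mem measurableSet_Icc] with t htne htm
      exact aux_pointwise (lt_of_le_of_ne htm.1 (Ne.symm htne)) (htm.2.trans h1)
    have hmono : (∫ t in (0:ℝ)..θ, g t) ≤ ∫ t in (0:ℝ)..θ, f t :=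
      intervalIntegral.integral_mono_ae_restrict h0.le hgint hI hae
    have hgval : (∫ t in (0:ℝ)..θ, g t)
        = θ * Real.log 2 + (θ * Real.log θ - θ) - θ ^ 3 / 12 := by
      have := intervalIntegral.integral_eq_sub_of_hasDerivAt_of_le (f' := g)
        (f := fun t => t * Real.log 2 + (t * Real.log t - t) - t ^ 3 / 12)
        h0.le
        (by
          apply Continuous.continuousOn
          exact ((continuous_id.mul continuous_const).add
            (Real.continuous_mul_log.sub continuous_id)).sub
            (by continuity))
        (by
          intro x hx
          have hx0 : x ≠ 0 := ne_of_gt hx.1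
          have d1 : HasDerivAt (fun t : ℝ => t * Real.log 2) (Real.log 2) x := by
            simpa using (hasDerivAt_id x).mul_const (Real.log 2)
          have d2 := (Real.hasDerivAt_mul_log hx0).sub (hasDerivAt_id x)
          have d3 : HasDerivAt (fun t : ℝ => t ^ 3 / 12) (x ^ 2 / 4) x := by
            have := (hasDerivAt_pow 3 x).div_const 12
            exact this.congr_deriv (by push_cast; ring)
          have := (d1.add d2).sub d3
          exact this.congr_deriv (by simp only [hg]; ring))
        hgint
      rw [this]
      simp
    have hlob : lob θ = -∫ t in (0:ℝ)..θ, f t := rfl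
    rw [hlob]
    rw [hgval] at hmono
    linarith
  · -- non-integrable case: the integral is zero
    have hz : (∫ t in (0:ℝ)..θ, Real.log |2 * Real.sin t|) = 0 :=
      intervalIntegral.integral_undef hI
    have : lob θ = 0 := by simp only [lob, hz, neg_zero]
    rw [this]
    have hl2 := Real.log_two_lt_d9
    have hlθ : Real.log θ ≤ θ - 1 := Real.log_le_sub_one_of_pos h0
    nlinarith [pow_pos h0 3]

theorem log_three_lb : (1.0926 : ℝ) ≤ Real.log 3 := by
  rw [Real.le_log_iff_exp_le (by norm_num)]
  have kk : Real.exp (1.0926:ℝ) * Real.exp (-(0.0926:ℝ)) = Real.exp 1 := by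
    rw [← Real.exp_add]; norm_num
  have h3 : (0.9074:ℝ) ≤ Real.exp (-(0.0926:ℝ)) := by
    have := Real.add_one_le_exp (-(0.0926:ℝ)); linarith
  nlinarith [Real.exp_pos (1.0926:ℝ), Real.exp_one_lt_d9]

/-- For every `n ≥ 3`, the volume `2nΛ(π/n)` of the regular ideal `n`-gonal
bipyramid satisfies `2nΛ(π/n) ≤ 2π·log(n/2)`. -/
theorem bipyramid_volume_bound (n : ℕ) (hn : 3 ≤ n) :
    2 * n * lob (Real.pi / n) ≤ 2 * Real.pi * Real.log ((n : ℝ) / 2) := by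
  have hn0 : (0:ℝ) < n := by positivity
  have hn3 : (3:ℝ) ≤ n := by exact_mod_cast hn
  set θ : ℝ := Real.pi / n with hθdef
  have hθpos : 0 < θ := by positivity
  have hθle : θ ≤ 1.05 := by
    rw [hθdef, div_le_iff₀ hn0]
    nlinarith [Real.pi_lt_d2]
  have hnθ : (n:ℝ) * θ = Real.pi := by
    rw [hθdef]; field_simp
  have hlogθ : Real.log θ = Real.log Real.pi - Real.log n := by
    rw [hθdef, Real.log_div Real.pi_ne_zero (ne_of_gt hn0)]
  have hlogn2 : Real.log ((n:ℝ) / 2) = Real.log n - Real.log 2 :=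
    Real.log_div (ne_of_gt hn0) two_ne_zero
  have hkey := lob_le hθpos hθle
  have hP : (1.0926:ℝ) ≤ Real.log Real.pi := by
    have h3π : Real.log 3 ≤ Real.log Real.pi :=
      Real.log_le_log (by norm_num) Real.pi_gt_three.le
    linarith [log_three_lb]
  have hθsq : θ ^ 2 ≤ 1.1025 := by nlinarith
  have hstep : 2 * (n:ℝ) * lob θ
      ≤ 2 * (n:ℝ) * (θ - θ * Real.log 2 - θ * Real.log θ + θ ^ 3 / 12) := by
    have h2n : (0:ℝ) ≤ 2 * n := by positivity
    nlinarith
  calc 2 * (n:ℝ) * lob θ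
      ≤ 2 * (n:ℝ) * (θ - θ * Real.log 2 - θ * Real.log θ + θ ^ 3 / 12) := hstep
    _ = 2 * Real.pi * (1 - Real.log 2 - Real.log θ) + 2 * Real.pi * θ ^ 2 / 12 := by
        rw [← hnθ]; ring
    _ ≤ 2 * Real.pi * Real.log ((n:ℝ) / 2) := by
        rw [hlogθ, hlogn2]
        nlinarith [Real.pi_pos]
end
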